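/- Let α be a type, nds : α → ℝ, lat : α → ℝ, and latMax : ℝ. Suppose l : List α is sorted in non-increasing NDS order, i.e., l.Sorted (fun a b => nds b ≤ nds a). If l.find? (fun p => decide (lat p ≤ latMax)) = some p₀, then (i) p₀ ∈ l, (ii) lat p₀ ≤ latMax, and (iii) for every p ∈ l with lat p ≤ latMax one has nds p ≤ nds p₀. In other words, the first element of the list satisfying the latency bound maximizes the accuracy score nds among all elements of the list satisfying the bound. -/

import Mathlib

/-- Feasible case of Theorem 1 (correctness of `optPar`): in a list sorted in
non-increasing NDS order, the first element satisfying the latency bound is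
a member of the list, feasible, and maximizes `nds` among all feasible
elements of the list. -/
theorem optPar_feasible_correct {α : Type*} (nds lat : α → ℝ) (latMax : ℝ)
    (l : List α) (hsorted : l.Pairwise (fun a b => nds b ≤ nds a)) (p₀ : α)
    (hfind : l.find? (fun p => decide (lat p ≤ latMax)) = some p₀) :
    p₀ ∈ l ∧ lat p₀ ≤ latMax ∧
      ∀ p ∈ l, lat p ≤ latMax → nds p ≤ nds p₀ := by
  induction l with
  | nil => simp [List.find?] at hfind
  | cons a t ih =>
    rw [List.find?_cons] at hfind
    rcases List.pairwise_cons.mp hsorted with ⟨ha, ht⟩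
    by_cases h : lat a ≤ latMax
    · simp [h] at hfind
      subst hfind
      refine ⟨List.mem_cons_self, h, ?_⟩
      intro p hp _
      rcases List.mem_cons.mp hp with rfl | hp
      · exact le_refl _
      · exact ha p hp
    · rw [decide_eq_false h] at hfind
      obtain ⟨hmem, hfeas, hmax⟩ := ih ht hfind
      refine ⟨List.mem_cons_of_mem _ hmem, hfeas, ?_⟩
      intro p hp hpl
      rcases List.mem_cons.mp hp with rfl | hp
      · exact absurd hpl h
      · exact hmax p hp hpl
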